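/- Let G ∈ ℝ^{(m−ℓ)×d} be a Gale dual of M, i.e. ker M = im G (where d = dim(ker M)), and set G' = I·G ∈ ℝ^{m×d}. Then G' is a Gale dual of B', that is, D = ker B' = im G', and consequently dim D = d. -/
import Mathlib


open Matrix

lemma sum_split {n : ℕ} (hn : 0 < n) (f : Fin n → ℝ) :
    ∑ a, f a = (∑ b : Fin (n-1), f ⟨b, b.isLt.trans (Nat.sub_lt hn one_pos)⟩)
      + f ⟨n-1, Nat.sub_lt hn one_pos⟩ := by
  rw [← Fintype.sum_equiv (finCongr (Nat.succ_pred_eq_of_pos hn))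
    (fun a => f (finCongr (Nat.succ_pred_eq_of_pos hn) a)) f (fun _ => rfl)]
  rw [Fin.sum_univ_castSucc]
  rfl

section
variable {n l : ℕ} (mv : Fin l → ℕ) (hmv : ∀ i, 0 < mv i)
    (Iinc : Matrix (Σ i : Fin l, Fin (mv i)) (Σ i : Fin l, Fin (mv i - 1)) ℝ)
    (hIinc : ∀ (i : Fin l) (a : Fin (mv i)) (j : Fin l) (b : Fin (mv j - 1)),
      Iinc ⟨i, a⟩ ⟨j, b⟩ =
        if i = j then
          (if (a : ℕ) = (b : ℕ) then 1 else if (a : ℕ) = mv i - 1 then -1 else 0)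
        else 0)
    (J : Matrix (Fin l) (Σ i : Fin l, Fin (mv i)) ℝ)
    (hJ : ∀ (i j : Fin l) (a : Fin (mv j)), J i ⟨j, a⟩ = if j = i then 1 else 0)

include hIinc in
lemma Iinc_mulVec (y : (Σ i : Fin l, Fin (mv i - 1)) → ℝ) (i : Fin l) (a : Fin (mv i)) :
    Iinc.mulVec y ⟨i, a⟩ =
      if h : (a:ℕ) < mv i - 1 then y ⟨i, ⟨a, h⟩⟩ else -∑ b, y ⟨i, b⟩ := by
  unfold Matrix.mulVec dotProduct
  rw [← Finset.univ_sigma_univ, Finset.sum_sigma]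
  rw [Finset.sum_eq_single i]
  · by_cases h : (a:ℕ) < mv i - 1
    · rw [dif_pos h]
      rw [Finset.sum_eq_single (⟨(a:ℕ), h⟩ : Fin (mv i - 1))]
      · simp [hIinc]
      · intro b _ hb
        have hab : (a:ℕ) ≠ (b:ℕ) := fun he => hb (Fin.ext he.symm)
        simp [hIinc, hab, Nat.ne_of_lt h]
      · simp
    · rw [dif_neg h]
      have ha : (a:ℕ) = mv i - 1 :=
        le_antisymm (Nat.le_sub_one_of_lt a.isLt) (Nat.le_of_not_lt h)
      rw [← Finset.sum_neg_distrib]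
      refine Finset.sum_congr rfl fun b _ => ?_
      have hb := b.isLt
      have hab : (a:ℕ) ≠ (b:ℕ) := by omega
      show Iinc ⟨i, a⟩ ⟨i, b⟩ * y ⟨i, b⟩ = -y ⟨i, b⟩
      rw [hIinc, if_pos rfl, if_neg hab, if_pos ha]; ring
  · intro j _ hji
    simp [hIinc, (Ne.symm hji)]
  · simp

include hmv hIinc in
lemma Iinc_inj : Function.Injective Iinc.mulVecLin := by
  rw [← LinearMap.ker_eq_bot, LinearMap.ker_eq_bot']
  intro y hy
  funext ⟨i, b⟩
  have hlt : (b : ℕ) < mv i := b.isLt.trans (Nat.sub_lt (hmv i) one_pos)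
  have := congrFun (show Iinc.mulVec y = 0 from hy) ⟨i, ⟨b, hlt⟩⟩
  rwa [Iinc_mulVec mv Iinc hIinc, dif_pos b.isLt] at this

include hmv hIinc in
lemma sum_Iinc_mulVec (y : (Σ i : Fin l, Fin (mv i - 1)) → ℝ) (i : Fin l) :
    ∑ a : Fin (mv i), Iinc.mulVec y ⟨i, a⟩ = 0 := by
  rw [sum_split (hmv i)]
  have h1 : ∀ b : Fin (mv i - 1),
      Iinc.mulVec y ⟨i, ⟨b, b.isLt.trans (Nat.sub_lt (hmv i) one_pos)⟩⟩ = y ⟨i, b⟩ := by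
    intro b
    rw [Iinc_mulVec mv Iinc hIinc, dif_pos b.isLt]
  have h2 : Iinc.mulVec y ⟨i, ⟨mv i - 1, Nat.sub_lt (hmv i) one_pos⟩⟩ = -∑ b, y ⟨i, b⟩ := by
    rw [Iinc_mulVec mv Iinc hIinc, dif_neg (lt_irrefl _)]
  rw [h2, Finset.sum_congr rfl fun b _ => h1 b]
  ring

include hJ in
lemma J_mulVec (x : (Σ i : Fin l, Fin (mv i)) → ℝ) (i : Fin l) :
    J.mulVec x i = ∑ a : Fin (mv i), x ⟨i, a⟩ := by
  unfold Matrix.mulVec dotProduct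
  rw [← Finset.univ_sigma_univ, Finset.sum_sigma]
  rw [Finset.sum_eq_single i]
  · simp [hJ]
  · intro j _ hji
    simp [hJ, hji]
  · simp

end


/-- If `G` is a Gale dual of `M = B·I` (i.e. `im G = ker M`), then `G' = I·G` is a Gale
dual of `B' = (B over J)`, i.e. `D = ker B' = im G'`, and `dim D = d = dim (ker M)`.
Here the indices `{1,…,m}` are partitioned into `ℓ` classes of sizes `mv i`, `I` is the
block-diagonal incidence matrix, and `J` is the block-diagonal all-ones "Cayley" matrix. -/
theorem stmt_0 {n l : ℕ} (mv : Fin l → ℕ) (hmv : ∀ i, 0 < mv i)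
    (B : Matrix (Fin n) (Σ i : Fin l, Fin (mv i)) ℝ)
    (Iinc : Matrix (Σ i : Fin l, Fin (mv i)) (Σ i : Fin l, Fin (mv i - 1)) ℝ)
    (hIinc : ∀ (i : Fin l) (a : Fin (mv i)) (j : Fin l) (b : Fin (mv j - 1)),
      Iinc ⟨i, a⟩ ⟨j, b⟩ =
        if i = j then
          (if (a : ℕ) = (b : ℕ) then 1 else if (a : ℕ) = mv i - 1 then -1 else 0)
        else 0)
    (J : Matrix (Fin l) (Σ i : Fin l, Fin (mv i)) ℝ)
    (hJ : ∀ (i j : Fin l) (a : Fin (mv j)), J i ⟨j, a⟩ = if j = i then 1 else 0)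
    (d : ℕ)
    (hd : d = Module.finrank ℝ (LinearMap.ker (B * Iinc).mulVecLin))
    (G : Matrix (Σ i : Fin l, Fin (mv i - 1)) (Fin d) ℝ)
    (hG : LinearMap.range G.mulVecLin = LinearMap.ker (B * Iinc).mulVecLin) :
    LinearMap.ker (Matrix.fromRows B J).mulVecLin =
        LinearMap.range (Iinc * G).mulVecLin ∧
      Module.finrank ℝ (LinearMap.ker (Matrix.fromRows B J).mulVecLin) = d := by
  have key : LinearMap.ker (Matrix.fromRows B J).mulVecLin =
      LinearMap.range (Iinc * G).mulVecLin := by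
    apply le_antisymm
    · intro x hx
      have hx' : (Matrix.fromRows B J).mulVec x = 0 := hx
      rw [fromRows_mulVec] at hx'
      have hB : B.mulVec x = 0 := funext fun r => congrFun hx' (Sum.inl r)
      have hJx : ∀ i, ∑ a : Fin (mv i), x ⟨i, a⟩ = 0 := fun i => by
        rw [← J_mulVec mv J hJ]; exact congrFun hx' (Sum.inr i)
      set y : (Σ i : Fin l, Fin (mv i - 1)) → ℝ :=
        fun p => x ⟨p.1, ⟨p.2, p.2.isLt.trans (Nat.sub_lt (hmv p.1) one_pos)⟩⟩ with hy_def
      have hIy : Iinc.mulVec y = x := by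
        funext p
        obtain ⟨i, a⟩ := p
        rw [Iinc_mulVec mv Iinc hIinc]
        by_cases h : (a : ℕ) < mv i - 1
        · rw [dif_pos h]
        · rw [dif_neg h]
          have ha : (a:ℕ) = mv i - 1 :=
            le_antisymm (Nat.le_sub_one_of_lt a.isLt) (Nat.le_of_not_lt h)
          have hs := hJx i
          rw [sum_split (hmv i)] at hs
          have hlast : (⟨mv i - 1, Nat.sub_lt (hmv i) one_pos⟩ : Fin (mv i)) = a :=
            Fin.ext ha.symm
          rw [hlast] at hs
          have hsum : ∑ b, y ⟨i, b⟩ =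
              ∑ b : Fin (mv i - 1),
                x ⟨i, ⟨b, b.isLt.trans (Nat.sub_lt (hmv i) one_pos)⟩⟩ := rfl
          rw [hsum]
          linarith
      have hy : y ∈ LinearMap.ker (B * Iinc).mulVecLin := by
        rw [LinearMap.mem_ker]
        show (B * Iinc).mulVec y = 0
        rw [← Matrix.mulVec_mulVec, hIy]
        exact hB
      rw [← hG] at hy
      obtain ⟨v, hv⟩ := hy
      refine ⟨v, ?_⟩
      show (Iinc * G).mulVec v = x
      rw [← Matrix.mulVec_mulVec, show G.mulVec v = y from hv, hIy]
    · rintro x ⟨v, rfl⟩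
      show (Matrix.fromRows B J).mulVec ((Iinc * G).mulVecLin v) = 0
      have h1 : (Iinc * G).mulVecLin v = Iinc.mulVec (G.mulVec v) := by
        show (Iinc * G).mulVec v = _
        rw [← Matrix.mulVec_mulVec]
      rw [h1, fromRows_mulVec]
      have hBv : B.mulVec (Iinc.mulVec (G.mulVec v)) = 0 := by
        rw [Matrix.mulVec_mulVec]
        have : G.mulVec v ∈ LinearMap.ker (B * Iinc).mulVecLin := hG ▸ ⟨v, rfl⟩
        exact this
      have hJv : J.mulVec (Iinc.mulVec (G.mulVec v)) = 0 := by
        funext i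
        rw [J_mulVec mv J hJ]
        exact sum_Iinc_mulVec mv hmv Iinc hIinc _ i
      rw [hBv, hJv]
      funext s
      cases s <;> rfl
  refine ⟨key, ?_⟩
  rw [key, Matrix.mulVecLin_mul, LinearMap.range_comp, hG]
  exact ((Submodule.equivMapOfInjective Iinc.mulVecLin (Iinc_inj mv hmv Iinc hIinc)
    _).finrank_eq).symm.trans hd.symm
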